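/- (Theorem 4.1(3), Construction A: unimodularity.) Let C ⊆ 𝔽₂^n be a binary linear code, let ρ : ℤ^n → 𝔽₂^n be componentwise reduction modulo 2, and let Γ_C = (1/√2) · ρ^{-1}(C) ⊆ ℝ^n. Then C is self-dual (C = C^⊥) if and only if Γ_C is unimodular, i.e., Γ_C equals its dual lattice Γ_C^* = {x ∈ ℝ^n : ⟨x, v⟩ ∈ ℤ for all v ∈ Γ_C}. -/

import Mathlib

/-- Componentwise reduction modulo 2, ρ : ℤ^n → 𝔽₂^n. -/
def rhoMod2 (n : ℕ) (v : Fin n → ℤ) : Fin n → ZMod 2 := fun i => (v i : ZMod 2)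

/-- The Construction A lattice Γ_C = (1/√2) ρ⁻¹(C) ⊆ ℝ^n associated to a binary
linear code C ⊆ 𝔽₂^n. -/
def GammaA (n : ℕ) (C : Submodule (ZMod 2) (Fin n → ZMod 2)) : Set (Fin n → ℝ) :=
  {x | ∃ v : Fin n → ℤ, rhoMod2 n v ∈ C ∧ ∀ i, x i = (v i : ℝ) / Real.sqrt 2}

lemma dot_eq (n : ℕ) (a b : Fin n → ℤ) :
    ∑ i, ((a i : ℝ)/Real.sqrt 2) * ((b i : ℝ)/Real.sqrt 2)
      = ((∑ i, a i * b i : ℤ) : ℝ)/2 := by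
  push_cast
  rw [Finset.sum_div]
  refine Finset.sum_congr rfl fun i _ => ?_
  rw [div_mul_div_comm, Real.mul_self_sqrt (by norm_num)]

lemma sum_zmod (n : ℕ) (a b : Fin n → ℤ) :
    (∑ i, rhoMod2 n a i * rhoMod2 n b i = 0) ↔ (2:ℤ) ∣ ∑ i, a i * b i := by
  have : ((∑ i, a i * b i : ℤ) : ZMod 2) = ∑ i, rhoMod2 n a i * rhoMod2 n b i := by
    push_cast; rfl
  rw [← this, ZMod.intCast_zmod_eq_zero_iff_dvd]
  norm_num

lemma lift_mem (n : ℕ) (C : Submodule (ZMod 2) (Fin n → ZMod 2)) (c : Fin n → ZMod 2)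
    (hc : c ∈ C) :
    (fun i => (((c i).val : ℤ) : ℝ) / Real.sqrt 2) ∈ GammaA n C := by
  refine ⟨fun i => ((c i).val : ℤ), ?_, fun i => rfl⟩
  have : rhoMod2 n (fun i => ((c i).val : ℤ)) = c := by
    funext i
    simp [rhoMod2, ZMod.natCast_val, ZMod.cast_id]
  rwa [this]

lemma rho_lift (n : ℕ) (c : Fin n → ZMod 2) :
    rhoMod2 n (fun i => ((c i).val : ℤ)) = c := by
  funext i
  simp [rhoMod2, ZMod.natCast_val, ZMod.cast_id]

/-- Theorem 4.1(3), Construction A (unimodularity): C is self-dual (C = C^⊥) if and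
only if Γ_C is unimodular, i.e., Γ_C equals its dual lattice
Γ_C^* = {x ∈ ℝ^n : ⟨x, v⟩ ∈ ℤ for all v ∈ Γ_C}. -/
theorem constructionA_unimodular_iff (n : ℕ) (C : Submodule (ZMod 2) (Fin n → ZMod 2)) :
    (∀ u : Fin n → ZMod 2, u ∈ C ↔ ∀ c ∈ C, ∑ i, u i * c i = 0) ↔
    GammaA n C = {x : Fin n → ℝ | ∀ v ∈ GammaA n C, ∃ m : ℤ, ∑ i, x i * v i = (m : ℝ)} := by
  have s2 : Real.sqrt 2 ≠ 0 := by positivity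
  constructor
  · intro hsd
    ext x
    constructor
    · rintro ⟨a, ha, hax⟩ v ⟨b, hb, hbv⟩
      have key : (2:ℤ) ∣ ∑ i, a i * b i := by
        rw [← sum_zmod]
        exact ((hsd (rhoMod2 n a)).mp ha) _ hb
      obtain ⟨m, hm⟩ := key
      refine ⟨m, ?_⟩
      have : ∑ i, x i * v i = ((∑ i, a i * b i : ℤ) : ℝ)/2 := by
        rw [← dot_eq n a b]
        exact Finset.sum_congr rfl fun i _ => by rw [hax i, hbv i]
      rw [this, hm]
      push_cast
      ring
    · intro hx
      -- first: each coordinate of x is m_j / √2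
      have hcoord : ∀ j, ∃ m : ℤ, x j = (m : ℝ) / Real.sqrt 2 := by
        intro j
        have hv : (fun i => (((if i = j then (2:ℤ) else 0) : ℤ) : ℝ) / Real.sqrt 2)
            ∈ GammaA n C := by
          refine ⟨fun i => if i = j then (2:ℤ) else 0, ?_, fun i => rfl⟩
          have : rhoMod2 n (fun i => if i = j then (2:ℤ) else 0) = 0 := by
            funext i
            by_cases h : i = j <;> simp [rhoMod2, h] <;> decide
          rw [this]; exact C.zero_mem
        obtain ⟨m, hm⟩ := hx _ hv
        refine ⟨m, ?_⟩
        have hsum : ∑ i, x i * ((((if i = j then (2:ℤ) else 0) : ℤ) : ℝ) / Real.sqrt 2)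
            = x j * (2 / Real.sqrt 2) := by
          rw [Finset.sum_eq_single j]
          · simp
          · intro i _ hij; simp [hij]
          · simp
        rw [hsum] at hm
        field_simp at hm ⊢
        linear_combination (Real.sqrt 2 / 2) * hm + ((m : ℝ) / 2) * Real.mul_self_sqrt (show (0:ℝ) ≤ 2 by norm_num)
      choose a ha using hcoord
      have hmem : rhoMod2 n a ∈ C := by
        rw [hsd]
        intro c hc
        obtain ⟨m, hm⟩ := hx _ (lift_mem n C c hc)
        have heq : ∑ i, x i * ((((c i).val : ℤ) : ℝ) / Real.sqrt 2)
            = ((∑ i, a i * ((c i).val : ℤ) : ℤ) : ℝ)/2 := by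
          rw [← dot_eq n a (fun i => ((c i).val : ℤ))]
          exact Finset.sum_congr rfl fun i _ => by rw [ha i]
        rw [heq] at hm
        have hdvd : (2:ℤ) ∣ ∑ i, a i * ((c i).val : ℤ) := by
          rw [div_eq_iff (by norm_num : (2:ℝ) ≠ 0)] at hm
          have hS : (∑ i, a i * ((c i).val : ℤ) : ℤ) = m * 2 := by exact_mod_cast hm
          exact ⟨m, by omega⟩
        have := (sum_zmod n a (fun i => ((c i).val : ℤ))).mpr hdvd
        rwa [rho_lift n c] at this
      exact ⟨a, hmem, ha⟩
  · intro heq u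
    constructor
    · intro hu c hc
      have hxu : (fun i => (((u i).val : ℤ) : ℝ) / Real.sqrt 2) ∈ GammaA n C :=
        lift_mem n C u hu
      rw [heq] at hxu
      obtain ⟨m, hm⟩ := hxu _ (lift_mem n C c hc)
      have heq2 : ∑ i, ((((u i).val : ℤ) : ℝ) / Real.sqrt 2)
            * ((((c i).val : ℤ) : ℝ) / Real.sqrt 2)
          = ((∑ i, ((u i).val : ℤ) * ((c i).val : ℤ) : ℤ) : ℝ)/2 :=
        dot_eq n _ _
      rw [heq2] at hm
      have hdvd : (2:ℤ) ∣ ∑ i, ((u i).val : ℤ) * ((c i).val : ℤ) := by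
        rw [div_eq_iff (by norm_num : (2:ℝ) ≠ 0)] at hm
        have hS : (∑ i, ((u i).val : ℤ) * ((c i).val : ℤ) : ℤ) = m * 2 := by
          exact_mod_cast hm
        exact ⟨m, by omega⟩
      have h0 := (sum_zmod n _ _).mpr hdvd
      rwa [rho_lift n u, rho_lift n c] at h0
    · intro hu
      have hxu : (fun i => (((u i).val : ℤ) : ℝ) / Real.sqrt 2)
          ∈ {x : Fin n → ℝ | ∀ v ∈ GammaA n C, ∃ m : ℤ, ∑ i, x i * v i = (m : ℝ)} := by
        rintro v ⟨b, hb, hbv⟩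
        have hdvd : (2:ℤ) ∣ ∑ i, ((u i).val : ℤ) * b i := by
          rw [← sum_zmod, rho_lift n u]
          exact hu _ hb
        obtain ⟨m, hm⟩ := hdvd
        refine ⟨m, ?_⟩
        have : ∑ i, ((((u i).val : ℤ) : ℝ) / Real.sqrt 2) * v i
            = ((∑ i, ((u i).val : ℤ) * b i : ℤ) : ℝ)/2 := by
          rw [← dot_eq n _ b]
          exact Finset.sum_congr rfl fun i _ => by rw [hbv i]
        rw [this, hm]
        push_cast
        ring
      rw [← heq] at hxu
      obtain ⟨w, hw, hwx⟩ := hxu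
      have : (fun i => ((u i).val : ℤ)) = w := by
        funext i
        have h := hwx i
        rw [div_eq_div_iff (by positivity) (by positivity)] at h
        have h2 := mul_right_cancel₀ s2 h
        exact Int.cast_injective h2
      rw [← this, rho_lift n u] at hw
      exact hw
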